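/- Let p be a prime, m ≥ 1 an integer, and f : ℕ → ℕ. For every n ∈ ℕ: if n = p^m · r for some r ∈ ℕ then binom(p^m, n)_f ≡ f(r) (mod p), and otherwise binom(p^m, n)_f ≡ 0 (mod p). -/

import Mathlib

/-- The extended binomial coefficient `binom(k,n)_f`: the sum, over all
`k`-tuples `(π₁,…,π_k)` of nonnegative integers with `π₁ + ⋯ + π_k = n`,
of the products `f(π₁)⋯f(π_k)`. It counts the `f`-weighted integer
compositions of `n` with exactly `k` parts. -/
def extBinom (f : ℕ → ℕ) (k n : ℕ) : ℕ :=
  ∑ π ∈ Finset.Nat.antidiagonalTuple k n, ∏ i, f (π i)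

lemma sum_adt_succ {M : Type*} [AddCommMonoid M] (k n : ℕ) (g : (Fin (k + 1) → ℕ) → M) :
    ∑ π ∈ Finset.Nat.antidiagonalTuple (k + 1) n, g π =
      ∑ ab ∈ Finset.HasAntidiagonal.antidiagonal n, ∑ π ∈ Finset.Nat.antidiagonalTuple k ab.2,
        g (Fin.cons ab.1 π) := by
  rw [Finset.sum_sigma']
  refine Finset.sum_bij' (fun π _ => ⟨(π 0, ∑ i, Fin.tail π i), Fin.tail π⟩)
    (fun x _ => Fin.cons x.1.1 x.2) ?_ ?_ ?_ ?_ ?_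
  · intro π hπ
    rw [Finset.Nat.mem_antidiagonalTuple] at hπ
    refine Finset.mem_sigma.mpr ⟨Finset.HasAntidiagonal.mem_antidiagonal.mpr ?_,
      Finset.Nat.mem_antidiagonalTuple.mpr rfl⟩
    show π 0 + ∑ i, Fin.tail π i = n
    rw [← hπ, Fin.sum_univ_succ]
    rfl
  · intro x hx
    rw [Finset.mem_sigma, Finset.HasAntidiagonal.mem_antidiagonal, Finset.Nat.mem_antidiagonalTuple] at hx
    rw [Finset.Nat.mem_antidiagonalTuple, Fin.sum_cons, hx.2, hx.1]
  · intro π _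
    exact Fin.cons_self_tail π
  · intro x hx
    rw [Finset.mem_sigma, Finset.Nat.mem_antidiagonalTuple] at hx
    simp [Fin.tail_cons, hx.2]
  · intro π _
    rw [Fin.cons_self_tail]

lemma coeff_pow_adt {R : Type*} [CommSemiring R] (φ : Polynomial R) (k n : ℕ) :
    (φ ^ k).coeff n = ∑ π ∈ Finset.Nat.antidiagonalTuple k n, ∏ i, φ.coeff (π i) := by
  induction k generalizing n with
  | zero =>
    cases n with
    | zero => simp
    | succ n => simp [Polynomial.coeff_one]
  | succ k ih =>
    rw [pow_succ', Polynomial.coeff_mul, sum_adt_succ]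
    refine Finset.sum_congr rfl fun ab _ => ?_
    rw [ih, Finset.mul_sum]
    refine Finset.sum_congr rfl fun π _ => ?_
    simp [Fin.prod_univ_succ]

theorem extBinom_prime_pow_row (p : ℕ) (hp : p.Prime) (m : ℕ) (hm : 1 ≤ m)
    (f : ℕ → ℕ) (n : ℕ) :
    (∀ r, n = p ^ m * r → extBinom f (p ^ m) n ≡ f r [MOD p]) ∧
    ((¬ ∃ r, n = p ^ m * r) → extBinom f (p ^ m) n ≡ 0 [MOD p]) := by
  haveI : Fact p.Prime := ⟨hp⟩
  set P : Polynomial (ZMod p) :=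
    ∑ i ∈ Finset.range (n + 1), Polynomial.C ((f i : ZMod p)) * Polynomial.X ^ i with hP
  have hcoeff : ∀ j, j ≤ n → P.coeff j = (f j : ZMod p) := by
    intro j hj
    rw [hP, Polynomial.finset_sum_coeff]
    rw [Finset.sum_eq_single j]
    · simp
    · intro b _ hb
      simp [Polynomial.coeff_C_mul, Polynomial.coeff_X_pow, Ne.symm hb]
    · intro h
      exact absurd (Finset.mem_range.mpr (Nat.lt_succ_of_le hj)) h
  -- key: (extBinom f (p^m) n : ZMod p) = (P ^ p^m).coeff n
  have key : ((extBinom f (p ^ m) n : ℕ) : ZMod p) = (P ^ p ^ m).coeff n := by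
    rw [coeff_pow_adt, extBinom, Nat.cast_sum]
    refine Finset.sum_congr rfl fun π hπ => ?_
    rw [Finset.Nat.mem_antidiagonalTuple] at hπ
    rw [Nat.cast_prod]
    refine Finset.prod_congr rfl fun i _ => ?_
    rw [hcoeff (π i) (hπ ▸ Finset.single_le_sum (fun _ _ => Nat.zero_le _)
      (Finset.mem_univ i))]
  -- Frobenius: P ^ p^m = expand (p^m) P over ZMod p
  have hfrob : P ^ p ^ m = Polynomial.expand (ZMod p) (p ^ m) P := by
    have := Polynomial.map_iterateFrobenius_expand (p := p) P m
    rw [← this]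
    have hid : iterateFrobenius (ZMod p) p m = RingHom.id _ := by
      ext x
      rw [iterateFrobenius_def]
      exact ZMod.pow_card_pow x
    rw [hid, Polynomial.map_id]
  have hpow : (P ^ p ^ m).coeff n =
      if p ^ m ∣ n then P.coeff (n / p ^ m) else 0 := by
    rw [hfrob, Polynomial.coeff_expand (Nat.pow_pos (n := m) hp.pos)]
  constructor
  · intro r hr
    rw [← ZMod.natCast_eq_natCast_iff]
    rw [key, hpow, if_pos ⟨r, hr⟩, hr, Nat.mul_div_cancel_left r
      (Nat.pow_pos (n := m) hp.pos)]
    exact hcoeff r (hr ▸ Nat.le_mul_of_pos_left r (Nat.pow_pos (n := m) hp.pos))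
  · intro hnr
    rw [← ZMod.natCast_eq_natCast_iff, key, hpow, if_neg, Nat.cast_zero]
    intro ⟨r, hrd⟩
    exact hnr ⟨r, hrd⟩
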